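/- arXiv:1806.07980 — 5 statements merged into one kernel-verified Lean document; each statement's English description precedes it below -/
import Mathlib

section
/- Let F > 0, κ > 0 and suppose F > 4(F+κ)². Then at the steady state (u₊, v₋) and wave number m = 0, the constant coefficient of the dispersion relation satisfies D = (F+κ)(v₋² − F) < 0, and consequently the quadratic λ² + λ·T + D has a real root λ > 0. Hence the steady state (u₊, v₋) is always (linearly) unstable. -/
/-- At the steady state `(u₊, v₋)` of the Gray–Scott system with `F > 4(F+κ)²`, the
constant coefficient of the dispersion relation at wave number `m = 0` satisfies
`D = (F+κ)(v₋² - F) < 0`, and hence the quadratic `λ² + λ·T + D` has a positive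
real root: the steady state `(u₊, v₋)` is always linearly unstable. -/
theorem gs_uplus_vminus_unstable (F κ : ℝ) (hF : 0 < F) (hκ : 0 < κ)
    (h : F > 4 * (F + κ) ^ 2)
    (γ up vm : ℝ)
    (hγ : γ = (F + κ) / F)
    (hup : up = (1 + Real.sqrt (1 - 4 * γ ^ 2 * F)) / 2)
    (hvm : vm = (1 - Real.sqrt (1 - 4 * γ ^ 2 * F)) / (2 * γ)) :
    ((F + κ) * (vm ^ 2 + F) - 2 * F * up * vm = (F + κ) * (vm ^ 2 - F) ∧
      (F + κ) * (vm ^ 2 - F) < 0) ∧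
    ∃ lam : ℝ, 0 < lam ∧
      lam ^ 2 + lam * (2 * F + κ + vm ^ 2 - 2 * up * vm) +
        ((F + κ) * (vm ^ 2 + F) - 2 * F * up * vm) = 0 := by
  have hγpos : 0 < γ := by rw [hγ]; positivity
  have hγF : γ * F = F + κ := by rw [hγ]; field_simp
  set s := Real.sqrt (1 - 4 * γ ^ 2 * F) with hs
  have harg : 0 < 1 - 4 * γ ^ 2 * F := by
    have : 4 * γ ^ 2 * F * F = 4 * (F + κ) ^ 2 := by nlinarith [hγF]
    have hF' : F ≠ 0 := ne_of_gt hF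
    nlinarith
  have hs2 : s ^ 2 = 1 - 4 * γ ^ 2 * F := Real.sq_sqrt (le_of_lt harg)
  have hspos : 0 < s := Real.sqrt_pos.mpr harg
  have hslt : s < 1 := by nlinarith [hs2, sq_nonneg γ]
  have hkey : up * vm = F + κ := by
    rw [hup, hvm]
    field_simp
    nlinarith [hs2, hγF]
  have hvm2 : vm ^ 2 < F := by
    rw [hvm]
    rw [div_pow, div_lt_iff₀ (by positivity)]
    nlinarith [hs2]
  have hD : (F + κ) * (vm ^ 2 - F) < 0 :=
    mul_neg_of_pos_of_neg (by linarith) (by linarith)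
  have hDeq : (F + κ) * (vm ^ 2 + F) - 2 * F * up * vm = (F + κ) * (vm ^ 2 - F) := by
    have : 2 * F * up * vm = 2 * F * (F + κ) := by rw [mul_assoc, hkey]
    linarith [this]
  refine ⟨⟨hDeq, hD⟩, ?_⟩
  set T := 2 * F + κ + vm ^ 2 - 2 * up * vm with hT
  have hDneg : (F + κ) * (vm ^ 2 + F) - 2 * F * up * vm < 0 := by rw [hDeq]; exact hD
  have hdisc : 0 ≤ T ^ 2 - 4 * ((F + κ) * (vm ^ 2 + F) - 2 * F * up * vm) := by
    nlinarith [sq_nonneg T]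
  set r := Real.sqrt (T ^ 2 - 4 * ((F + κ) * (vm ^ 2 + F) - 2 * F * up * vm)) with hr
  have hr2 : r ^ 2 = T ^ 2 - 4 * ((F + κ) * (vm ^ 2 + F) - 2 * F * up * vm) :=
    Real.sq_sqrt hdisc
  have hrpos : T < r := by
    nlinarith [Real.sqrt_nonneg (T ^ 2 - 4 * ((F + κ) * (vm ^ 2 + F) - 2 * F * up * vm)), hr2]
  refine ⟨(-T + r) / 2, by linarith, ?_⟩
  linear_combination hr2 / 4
end

section
/- Let F > 0, κ > 0 with F ≥ 4(F+κ)², and let v₊ = (1/(2γ))(1 + √(1−4γ²F)) with γ = (F+κ)/F. If v₊² = κ (equivalently, if T = v₊² − κ vanishes at the steady state (u₋, v₊) with wave number m = 0), then (F + κ)² = √κ · F; equivalently, F² + (2κ − √κ)·F + κ² = 0. -/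
/-- If the Hopf condition `v₊² = κ` holds at the steady state `(u₋, v₊)` of the
Gray–Scott system (i.e. the trace coefficient `T = v₊² - κ` vanishes at wave
number `m = 0`), then `(F + κ)² = √κ · F`, equivalently
`F² + (2κ - √κ)·F + κ² = 0`. -/
theorem gs_hopf_condition (F κ : ℝ) (hF : 0 < F) (hκ : 0 < κ)
    (h : F ≥ 4 * (F + κ) ^ 2)
    (γ vp : ℝ)
    (hγ : γ = (F + κ) / F)
    (hvp : vp = (1 + Real.sqrt (1 - 4 * γ ^ 2 * F)) / (2 * γ))
    (hhopf : vp ^ 2 = κ) :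
    (F + κ) ^ 2 = Real.sqrt κ * F ∧
    F ^ 2 + (2 * κ - Real.sqrt κ) * F + κ ^ 2 = 0 := by
  have hγpos : 0 < γ := by
    rw [hγ]; positivity
  have hγne : γ ≠ 0 := ne_of_gt hγpos
  have harg : 0 ≤ 1 - 4 * γ ^ 2 * F := by
    rw [hγ]
    have hF2 : (F:ℝ)^2 ≠ 0 := by positivity
    rw [div_pow]
    field_simp
    rw [zero_mul]
    nlinarith
  set s := Real.sqrt (1 - 4 * γ ^ 2 * F) with hs
  have hs2 : s ^ 2 = 1 - 4 * γ ^ 2 * F := Real.sq_sqrt harg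
  have hsnn : 0 ≤ s := Real.sqrt_nonneg _
  have hvppos : 0 < vp := by
    rw [hvp]
    positivity
  have hvpsqrt : Real.sqrt κ = vp := by
    rw [← hhopf, Real.sqrt_sq hvppos.le]
  -- quadratic relation: γ vp² - vp + γ F = 0
  have hquad : γ * vp ^ 2 - vp + γ * F = 0 := by
    have h1 : 2 * γ * vp = 1 + s := by
      rw [hvp]; field_simp
    have h2 : (2 * γ * vp - 1) ^ 2 = s ^ 2 := by rw [h1]; ring
    rw [hs2] at h2
    have : γ * (γ * vp ^ 2 - vp + γ * F) = 0 := by nlinarith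
    rcases mul_eq_zero.mp this with h' | h'
    · exact absurd h' hγne
    · exact h'
  have hγF : γ * F = F + κ := by
    rw [hγ]; field_simp
  have h3 : γ * (κ + F) = vp := by
    rw [hhopf] at hquad; linarith [hquad]
  have key : (F + κ) ^ 2 = Real.sqrt κ * F := by
    rw [hvpsqrt]
    nlinarith [h3, hγF]
  exact ⟨key, by nlinarith [key]⟩
end

section
/- Let 0 < κ < 1/16 and define F_c = (√κ − 2κ − √((2κ − √κ)² − 4κ²))/2. Then F_c > 0, (F_c + κ)² = √κ · F_c (equivalently F_c² + (2κ − √κ)·F_c + κ² = 0), and 4(F_c + κ)² < F_c, so that the nontrivial steady states of the Gray–Scott system exist at F = F_c. -/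
/-- For `0 < κ < 1/16`, the critical feed rate
`F_c = (√κ - 2κ - √((2κ - √κ)² - 4κ²))/2` satisfies `F_c > 0`,
`(F_c + κ)² = √κ · F_c` (equivalently `F_c² + (2κ - √κ)·F_c + κ² = 0`), and
`4(F_c + κ)² < F_c`, so the nontrivial steady states exist at `F = F_c`. -/
theorem gs_critical_feed_rate (κ Fc : ℝ) (hκ0 : 0 < κ) (hκ1 : κ < 1 / 16)
    (hFc : Fc = (Real.sqrt κ - 2 * κ -
      Real.sqrt ((2 * κ - Real.sqrt κ) ^ 2 - 4 * κ ^ 2)) / 2) :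
    0 < Fc ∧
    (Fc + κ) ^ 2 = Real.sqrt κ * Fc ∧
    Fc ^ 2 + (2 * κ - Real.sqrt κ) * Fc + κ ^ 2 = 0 ∧
    4 * (Fc + κ) ^ 2 < Fc := by
  set s := Real.sqrt κ with hs
  have hs0 : 0 < s := Real.sqrt_pos.mpr hκ0
  have hs2 : s ^ 2 = κ := Real.sq_sqrt hκ0.le
  have hs4 : s < 1 / 4 := by
    have : s < Real.sqrt (1 / 16) := Real.sqrt_lt_sqrt hκ0.le hκ1
    have h16 : Real.sqrt (1 / 16) = 1 / 4 := by
      rw [show (1 / 16 : ℝ) = (1 / 4) ^ 2 by norm_num]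
      exact Real.sqrt_sq (by norm_num)
    linarith [this, h16 ▸ this]
  -- discriminant
  have hD : (2 * κ - s) ^ 2 - 4 * κ ^ 2 = s ^ 2 * (1 - 4 * s) := by
    rw [← hs2]; ring
  have ht0 : 0 ≤ 1 - 4 * s := by linarith
  have hsqD : Real.sqrt ((2 * κ - s) ^ 2 - 4 * κ ^ 2)
      = s * Real.sqrt (1 - 4 * s) := by
    rw [hD, Real.sqrt_mul (sq_nonneg s), Real.sqrt_sq hs0.le]
  set t := Real.sqrt (1 - 4 * s) with htdef
  have ht2 : t ^ 2 = 1 - 4 * s := Real.sq_sqrt ht0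
  have htnn : 0 ≤ t := Real.sqrt_nonneg _
  have hFc' : Fc = s * (1 - 2 * s - t) / 2 := by
    rw [hFc, hsqD, ← hs2]; ring
  have htlt : t < 1 - 2 * s := by nlinarith
  have hFcpos : 0 < Fc := by rw [hFc']; nlinarith
  have hquad : Fc ^ 2 + (2 * κ - s) * Fc + κ ^ 2 = 0 := by
    rw [hFc', ← hs2]; nlinarith [ht2]
  have hsq : (Fc + κ) ^ 2 = s * Fc := by nlinarith [hquad]
  refine ⟨hFcpos, hsq, hquad, ?_⟩
  rw [hsq]; nlinarith
end

section
/- Let 0 < κ < 1/16 and set F = F_c = (√κ − 2κ − √((2κ − √κ)² − 4κ²))/2. Then with γ = (F+κ)/F and v₊ = (1/(2γ))(1 + √(1−4γ²F)), one has v₊² = κ; consequently the trace coefficient T = v₊² − κ of the dispersion relation at the steady state (u₋, v₊) and wave number m = 0 vanishes, i.e., F = F_c is the Hopf bifurcation point. -/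
/-- For `0 < κ < 1/16` and `F = F_c` the critical feed rate, the steady-state
component `v₊` satisfies `v₊² = κ`, i.e. the trace coefficient `T = v₊² - κ` of the
dispersion relation at `(u₋, v₊)` and wave number `m = 0` vanishes: `F = F_c` is
the Hopf bifurcation point. -/
theorem gs_hopf_point (κ F γ vp : ℝ) (hκ0 : 0 < κ) (hκ1 : κ < 1 / 16)
    (hF : F = (Real.sqrt κ - 2 * κ -
      Real.sqrt ((2 * κ - Real.sqrt κ) ^ 2 - 4 * κ ^ 2)) / 2)
    (hγ : γ = (F + κ) / F)
    (hvp : vp = (1 + Real.sqrt (1 - 4 * γ ^ 2 * F)) / (2 * γ)) :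
    vp ^ 2 = κ ∧ vp ^ 2 - κ = 0 := by
  set s := Real.sqrt κ with hsdef
  set t := Real.sqrt (1 - 4 * s) with htdef
  have hs0 : 0 < s := Real.sqrt_pos.mpr hκ0
  have hs2 : s ^ 2 = κ := Real.sq_sqrt hκ0.le
  have hs14 : s < 1 / 4 := by
    have h16 : Real.sqrt (1 / 16) = 1 / 4 := by
      rw [show (1:ℝ)/16 = (1/4)^2 by norm_num, Real.sqrt_sq (by norm_num)]
    have := Real.sqrt_lt_sqrt hκ0.le hκ1
    rw [h16] at this; exact this
  have ht0 : 0 ≤ t := Real.sqrt_nonneg _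
  have ht2 : t ^ 2 = 1 - 4 * s := Real.sq_sqrt (by linarith)
  have ht1 : t < 1 := by nlinarith
  have h1t : (0:ℝ) < 1 - t := by linarith
  have hA : (2 * κ - s) ^ 2 - 4 * κ ^ 2 = s ^ 2 * (1 - 4 * s) := by
    rw [← hs2]; ring
  have hsqrtA : Real.sqrt ((2 * κ - s) ^ 2 - 4 * κ ^ 2) = s * t := by
    rw [hA, Real.sqrt_mul (sq_nonneg s), Real.sqrt_sq hs0.le]
  have hF' : F = s * (1 - t) ^ 2 / 4 := by
    rw [hF, hsqrtA]; linear_combination hs2 - (s / 4) * ht2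
  have hFκ : F + κ = s * (1 - t) / 2 := by
    rw [hF']; linear_combination (s / 4) * ht2 - hs2
  have hγ' : γ = 2 / (1 - t) := by
    rw [hγ, hFκ, hF', div_div_div_eq, div_eq_div_iff (by positivity) (by positivity)]
    ring
  have hX : 1 - 4 * γ ^ 2 * F = t ^ 2 := by
    rw [hγ', hF', div_pow]
    field_simp
    linear_combination -ht2
  have hsqrtX : Real.sqrt (1 - 4 * γ ^ 2 * F) = t := by
    rw [hX, Real.sqrt_sq ht0]
  have hvp' : vp = s := by
    rw [hvp, hsqrtX, hγ', div_eq_iff (by positivity)]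
    field_simp
    linear_combination -ht2
  refine ⟨?_, ?_⟩ <;> rw [hvp', hs2] <;> ring
end

section
/- Let 0 < κ < 1/16 and F_c = (√κ − 2κ − √((2κ − √κ)² − 4κ²))/2. Then F_c < κ; consequently, at the Hopf bifurcation point (where v₊² = κ at the steady state (u₋, v₊)), the constant coefficient of the dispersion relation at m = 0 satisfies D = (F_c + κ)·(κ − F_c) > 0, so the pair of eigenvalues crossing the imaginary axis is purely imaginary and nonzero. -/
/-- For `0 < κ < 1/16`, the critical feed rate `F_c` satisfies `F_c < κ`;
consequently, at the Hopf bifurcation point (where `v₊² = κ`), the constant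
coefficient of the dispersion relation at `m = 0` satisfies
`D = (F_c + κ)·(κ - F_c) > 0`, so the eigenvalues crossing the imaginary axis are
purely imaginary and nonzero. -/
theorem gs_hopf_D_positive (κ Fc : ℝ) (hκ0 : 0 < κ) (hκ1 : κ < 1 / 16)
    (hFc : Fc = (Real.sqrt κ - 2 * κ -
      Real.sqrt ((2 * κ - Real.sqrt κ) ^ 2 - 4 * κ ^ 2)) / 2) :
    Fc < κ ∧ (Fc + κ) * (κ - Fc) > 0 := by
  have hs0 : 0 < Real.sqrt κ := Real.sqrt_pos.mpr hκ0
  set s := Real.sqrt κ with hsdef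
  have hs2 : s ^ 2 = κ := Real.sq_sqrt hκ0.le
  have hs14 : s < 1 / 4 := by nlinarith
  have hinner : (2 * κ - s) ^ 2 - 4 * κ ^ 2 = s ^ 2 * (1 - 4 * s) := by nlinarith
  have ht : Real.sqrt ((2 * κ - s) ^ 2 - 4 * κ ^ 2) = s * Real.sqrt (1 - 4 * s) := by
    rw [hinner, Real.sqrt_mul (sq_nonneg s), Real.sqrt_sq hs0.le]
  set t := Real.sqrt (1 - 4 * s) with htdef
  have ht2 : t ^ 2 = 1 - 4 * s := Real.sq_sqrt (by linarith)
  have ht0 : 0 < t := Real.sqrt_pos.mpr (by linarith)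
  have ht1 : t < 1 := by nlinarith
  have htlb : 1 - 4 * s < t := by nlinarith [mul_pos ht0 (by linarith : (0:ℝ) < 1 - t)]
  rw [hFc, ht]
  have h2 : κ - (s - 2 * κ - s * t) / 2 > 0 := by nlinarith
  have h1 : (s - 2 * κ - s * t) / 2 + κ > 0 := by
    nlinarith [mul_pos hs0 (by linarith : (0:ℝ) < 1 - t)]
  exact ⟨by linarith, mul_pos h1 h2⟩
end
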